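/- Define inductively families of finite subsets of $\mathbb{N}$: $\mathcal{F}_0 = \{\{n\} : n \in \mathbb{N}\} \cup \{\emptyset\}$, and for each countable ordinal $\alpha \ge 1$, with $\alpha_i = \alpha - 1$ for all $i$ if $\alpha$ is a successor and $\alpha_i \uparrow \alpha$ a fixed sequence if $\alpha$ is a limit, let $\mathcal{F}_\alpha = \bigcup_{n=1}^\infty \{F_1 \cup \cdots \cup F_n : F_i \in \mathcal{F}_{\alpha_i}, \; n \le F_1 < F_2 < \cdots < F_n\}$ (where $F < G$ means $\max F < \min G$ for nonempty sets and $n \le F_1$ means $n \le \min F_1$). Then each $\mathcal{F}_\alpha$ is adequate: $F \in \mathcal{F}_\alpha$ and $G \subset F$ implies $G \in \mathcal{F}_\alpha$. -/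

import Mathlib

/-- Admissible unions of blocks: sets of the form `F₁ ∪ ⋯ ∪ F_n` with
`F_i ∈ F (g i)`, `n ≤ F₁ < F₂ < ⋯ < F_n` (conditions read on nonempty blocks,
equivalently every element is `≥ n` and blocks come in increasing order). -/
def schreierComb (F : Ordinal → Set (Finset ℕ)) (g : ℕ → Ordinal) :
    Set (Finset ℕ) :=
  {S | ∃ n : ℕ, 1 ≤ n ∧ ∃ f : Fin n → Finset ℕ,
    (∀ i : Fin n, f i ∈ F (g i.val)) ∧
    (∀ i : Fin n, ∀ m ∈ f i, n ≤ m) ∧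
    (∀ i j : Fin n, i < j → ∀ a ∈ f i, ∀ b ∈ f j, a < b) ∧
    S = Finset.univ.biUnion f}

/-- A system of generalized Schreier families `𝓕_α` for countable `α`:
`𝓕₀` is the singletons together with `∅`; for a successor `β+1` one uses the
constant sequence `α_i = β`; for a limit `α` a fixed strictly increasing
sequence `α_i ↑ α`. -/
def SchreierSystem (F : Ordinal → Set (Finset ℕ)) : Prop :=
  F 0 = insert ∅ {S : Finset ℕ | ∃ n : ℕ, S = {n}} ∧
  (∀ β : Ordinal, (β + 1).card ≤ Cardinal.aleph0 →
    F (β + 1) = schreierComb F (fun _ => β)) ∧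
  (∀ α : Ordinal, α.card ≤ Cardinal.aleph0 → Order.IsSuccLimit α →
    ∃ g : ℕ → Ordinal, StrictMono g ∧ (∀ i, g i < α) ∧ (⨆ i, g i) = α ∧
      F α = schreierComb F g)

/-- each generalized Schreier family `𝓕_α` is adequate. -/
theorem stmt_11 (F : Ordinal → Set (Finset ℕ)) (hF : SchreierSystem F) :
    ∀ α : Ordinal, α.card ≤ Cardinal.aleph0 →
      ∀ S ∈ F α, ∀ G ⊆ S, G ∈ F α := by
  obtain ⟨h0, hsucc, hlim⟩ := hF
  -- key: adequacy of a comb given adequacy of the pieces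
  have key : ∀ g : ℕ → Ordinal,
      (∀ i : ℕ, ∀ S ∈ F (g i), ∀ G ⊆ S, G ∈ F (g i)) →
      ∀ S ∈ schreierComb F g, ∀ G ⊆ S, G ∈ schreierComb F g := by
    intro g hAd S hS G hG
    obtain ⟨n, hn, f, h1, h2, h3, rfl⟩ := hS
    refine ⟨n, hn, fun i => f i ∩ G, ?_, ?_, ?_, ?_⟩
    · exact fun i => hAd i.val (f i) (h1 i) _ (Finset.inter_subset_left)
    · exact fun i m hm => h2 i m (Finset.mem_inter.1 hm).1
    · exact fun i j hij a ha b hb =>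
        h3 i j hij a (Finset.mem_inter.1 ha).1 b (Finset.mem_inter.1 hb).1
    · ext m
      simp only [Finset.mem_biUnion, Finset.mem_inter, Finset.mem_univ, true_and]
      constructor
      · intro hm
        have := hG hm
        rw [Finset.mem_biUnion] at this
        obtain ⟨i, _, hi⟩ := this
        exact ⟨i, hi, hm⟩
      · rintro ⟨i, _, hm⟩; exact hm
  intro α
  induction α using Ordinal.induction with
  | h α IH =>
    intro hcard S hS G hG
    rcases Ordinal.zero_or_succ_or_isSuccLimit α with h | ⟨β, hβ⟩ | h
    · subst h
      rw [h0] at hS ⊢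
      rcases hS with hS | ⟨n, rfl⟩
      · left
        have : S = (∅ : Finset ℕ) := hS
        exact Finset.subset_empty.1 (this ▸ hG)
      · rcases Finset.subset_singleton_iff.1 hG with rfl | rfl
        · left; rfl
        · right; exact ⟨n, rfl⟩
    · have hβ' : α = β + 1 := by rw [← hβ, Ordinal.add_one_eq_succ]
      subst hβ'
      rw [hsucc β hcard] at hS ⊢
      have hlt : β < β + 1 := lt_of_lt_of_le (lt_add_one β) (le_refl _)
      exact key _ (fun _ => IH β hlt
        (le_trans (Ordinal.card_le_card (le_of_lt hlt)) hcard)) S hS G hG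
    · obtain ⟨g, _, hglt, _, hfa⟩ := hlim α hcard h
      rw [hfa] at hS ⊢
      exact key g (fun i => IH (g i) (hglt i)
        (le_trans (Ordinal.card_le_card (le_of_lt (hglt i))) hcard)) S hS G hG
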